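/- Let X be a topological space with more than one point and let κ be an infinite cardinal with d(X) ≤ κ. Then there exists a subset A of the product space X^(2^κ) such that |A| = κ, A is κ-dense in X^(2^κ), and for every x ∈ A the range {x(α) : α < 2^κ} is a finite set. -/

import Mathlib

open Cardinal

/-- A subset `A` of a topological space `Y` is `κ`-dense if `|A ∩ U| ≥ κ`
for every nonempty open `U ⊆ Y`. -/
def KDense {Y : Type*} [TopologicalSpace Y] (κ : Cardinal) (A : Set Y) : Prop :=
  ∀ U : Set Y, IsOpen U → U.Nonempty → κ ≤ #↥(A ∩ U)

/-- The density of a topological space: the smallest cardinality of a dense subset. -/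
noncomputable def density (X : Type u) [TopologicalSpace X] : Cardinal.{u} :=
  sInf {c : Cardinal.{u} | ∃ s : Set X, Dense s ∧ #s = c}

/-- If `X` is a space with more than one point and `κ` is an infinite
cardinal with `d(X) ≤ κ`, then there is a set `A ⊆ X^(2^κ)` with `|A| = κ`,
`A` κ-dense in `X^(2^κ)`, and every `x ∈ A` has finite range. -/
theorem stmt0 {X : Type u} [TopologicalSpace X] (hX : Nontrivial X)
    (κ : Cardinal.{u}) (hκ : ℵ₀ ≤ κ) (hd : density X ≤ κ) :
    ∃ A : Set (((2 : Cardinal.{u}) ^ κ).out → X),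
      #A = κ ∧ KDense κ A ∧ ∀ x ∈ A, (Set.range x).Finite := by
  classical
  obtain ⟨a, b, hab⟩ := hX
  have hne : {c : Cardinal.{u} | ∃ s : Set X, Dense s ∧ #s = c}.Nonempty :=
    ⟨#(Set.univ : Set X), Set.univ, dense_univ, rfl⟩
  obtain ⟨s, hsd, hsc⟩ := csInf_mem hne
  have hs : #s ≤ κ := le_trans (le_of_eq hsc) hd
  set J := κ.out with hJ
  have hJc : #J = κ := mk_out κ
  have hJinf : Infinite J := infinite_iff.mpr (hJc ▸ hκ)
  set I := ((2 : Cardinal.{u}) ^ κ).out with hI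
  have hIc : #I = #(J → ULift.{u} Bool) := by
    rw [mk_out, ← hJc, ← power_def]
    congr 1
    simp [mk_fintype]
  obtain ⟨e⟩ : Nonempty (I ≃ (J → ULift.{u} Bool)) := Cardinal.eq.mp hIc
  set T : Set X := insert a (insert b s) with hT
  have haT : a ∈ T := Set.mem_insert _ _
  have hbT : b ∈ T := Set.mem_insert_of_mem _ (Set.mem_insert _ _)
  have hsT : s ⊆ T := fun y hy => Set.mem_insert_of_mem _ (Set.mem_insert_of_mem _ hy)
  have hTκ : #T ≤ κ := by
    calc #T ≤ #(insert b s : Set X) + 1 := mk_insert_le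
      _ ≤ (#s + 1) + 1 := by gcongr; exact mk_insert_le
      _ ≤ (κ + 1) + 1 := by gcongr
      _ = κ := by rw [add_one_eq hκ, add_one_eq hκ]
  let P := Σ F : Finset J, ((F → ULift.{u} Bool) → T)
  let Φ : P → I → X := fun p i => ((p.2 (fun j => e i j.1) : T) : X)
  let A := Set.range Φ
  -- cardinality bound
  have hAκ : #A ≤ κ := by
    refine le_trans mk_range_le ?_
    have hP : #P = sum fun F : Finset J => #((F → ULift.{u} Bool) → T) := mk_sigma _
    rw [hP]
    calc (sum fun F : Finset J => #((F → ULift.{u} Bool) → T))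
        ≤ sum fun _ : Finset J => κ := by
          refine sum_le_sum _ _ fun F => ?_
          rw [← power_def, mk_fintype (F → ULift.{u} Bool), power_natCast]
          exact le_trans (power_le_power_right hTκ) (power_nat_le hκ)
      _ = #(Finset J) * κ := sum_const' _ _
      _ = κ * κ := by rw [mk_finset_of_infinite, hJc]
      _ = κ := mul_eq_self hκ
  -- finite range
  have hfin : ∀ x ∈ A, (Set.range x).Finite := by
    rintro x ⟨p, rfl⟩
    have : Set.range (Φ p) ⊆ Subtype.val '' Set.range p.2 := by
      rintro y ⟨i, rfl⟩
      exact ⟨p.2 (fun j => e i j.1), Set.mem_range_self _, rfl⟩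
    exact Set.Finite.subset ((Set.finite_range p.2).image _) this
  -- κ-density
  have hKD : KDense κ A := by
    intro U hU hUne
    obtain ⟨x, hx⟩ := hUne
    obtain ⟨t, u, htu, hsub⟩ := isOpen_pi_iff.mp hU x hx
    -- dense points in each u i
    have hdd : ∀ i : I, ∃ y, i ∈ t → (y ∈ s ∧ y ∈ u i) := by
      intro i
      by_cases hi : i ∈ t
      · obtain ⟨y, hy1, hy2⟩ := hsd.inter_open_nonempty (u i) (htu i hi).1 ⟨x i, (htu i hi).2⟩
        exact ⟨y, fun _ => ⟨hy2, hy1⟩⟩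
      · exact ⟨a, fun h => absurd h hi⟩
    choose d hdp using hdd
    let dT : I → T := fun i => if h : i ∈ t then ⟨d i, hsT (hdp i h).1⟩ else ⟨a, haT⟩
    -- separating finite set of coordinates
    let g : I → I → J := fun i i' =>
      if h : ∃ j, e i j ≠ e i' j then h.choose else Classical.arbitrary J
    let F0 : Finset J := t.biUnion fun i => t.image (g i)
    obtain ⟨F, hF0F, hFcard⟩ :=
      Infinite.exists_superset_card_eq F0 (F0.card + t.card) (Nat.le_add_right _ _)
    have htF : t.card ≤ F.card := by omega
    have hsep : ∀ i ∈ t, ∀ i' ∈ t, (∀ j ∈ F, e i j = e i' j) → i = i' := by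
      intro i hi i' hi' h
      by_contra hne'
      have hne2 : e i ≠ e i' := fun hh => hne' (e.injective hh)
      obtain ⟨j0, hj0⟩ := Function.ne_iff.mp hne2
      have hgj : e i (g i i') ≠ e i' (g i i') := by
        have hex : ∃ j, e i j ≠ e i' j := ⟨j0, hj0⟩
        simp only [g, dif_pos hex]
        exact hex.choose_spec
      have hmem : g i i' ∈ F0 :=
        Finset.mem_biUnion.mpr ⟨i, hi, Finset.mem_image.mpr ⟨i', hi', rfl⟩⟩
      exact hgj (h _ (hF0F hmem))
    -- a pattern avoiding all restrictions of points of t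
    have hpat : ∃ p : F → ULift.{u} Bool, ∀ i ∈ t, ∃ j : F, p j ≠ e i ↑j := by
      by_contra h
      push_neg at h
      have hsurj : ∀ p : F → ULift.{u} Bool,
          p ∈ t.image (fun i => fun j : F => e i ↑j) := by
        intro p
        obtain ⟨i, hi, hp⟩ := h p
        exact Finset.mem_image.mpr ⟨i, hi, (funext fun j => (hp j).symm)⟩
      have h1 : Fintype.card (F → ULift.{u} Bool) ≤ t.card := by
        calc Fintype.card (F → ULift.{u} Bool)
            = (Finset.univ : Finset (F → ULift.{u} Bool)).card := Finset.card_univ.symm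
          _ ≤ (t.image (fun i => fun j : F => e i ↑j)).card :=
              Finset.card_le_card fun p _ => hsurj p
          _ ≤ t.card := Finset.card_image_le
      have h2 : Fintype.card (F → ULift.{u} Bool) = 2 ^ F.card := by
        simp [Fintype.card_fun, Fintype.card_coe]
      have h3 : t.card < 2 ^ F.card :=
        lt_of_lt_of_le (Nat.lt_two_pow_self (n := t.card)) (Nat.pow_le_pow_right (by norm_num) htF)
      omega
    obtain ⟨p, hp⟩ := hpat
    -- the family of functions
    let v : ∀ α : J, (↥(insert α F) → ULift.{u} Bool) → T := fun α q =>
      if h : ∃ i ∈ t, ∀ j (hj : j ∈ F), q ⟨j, Finset.mem_insert_of_mem hj⟩ = e i j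
      then dT h.choose
      else if (q ⟨α, Finset.mem_insert_self α F⟩).down then ⟨a, haT⟩ else ⟨b, hbT⟩
    let xf : J → I → X := fun α => Φ ⟨insert α F, v α⟩
    have hxfA : ∀ α, xf α ∈ A := fun α => ⟨⟨insert α F, v α⟩, rfl⟩
    have hxfU : ∀ α, xf α ∈ U := by
      intro α
      refine hsub ?_
      intro i hi
      rw [Finset.mem_coe] at hi
      have hw : ∃ i' ∈ t, ∀ j (hj : j ∈ F),
          (fun j' : ↥(insert α F) => e i j'.1) ⟨j, Finset.mem_insert_of_mem hj⟩
            = e i' j := ⟨i, hi, fun j hj => rfl⟩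
      have : xf α i = ((dT hw.choose : T) : X) := by
        show ((v α (fun j' => e i j'.1) : T) : X) = _
        rw [show v α (fun j' : ↥(insert α F) => e i j'.1) = dT hw.choose from
          dif_pos hw]
      rw [this]
      obtain ⟨hw1, hw2⟩ := hw.choose_spec
      have : hw.choose = i := (hsep i hi _ hw1 fun j hj => hw2 j hj).symm
      rw [this]
      simp only [dT, dif_pos hi]
      exact (hdp i hi).2
    -- injectivity
    have hinj : ∀ α ∉ F, ∀ β ∉ F, α ≠ β → xf α ≠ xf β := by
      intro α hα β hβ hαβ
      let q : J → ULift.{u} Bool := fun j =>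
        if hj : j ∈ F then p ⟨j, hj⟩ else if j = α then ⟨true⟩ else ⟨false⟩
      let i := e.symm q
      have heq : e i = q := e.apply_symm_apply q
      have hnotex : ∀ γ : J, ¬ ∃ i' ∈ t, ∀ j (hj : j ∈ F),
          (fun j' : ↥(insert γ F) => e i j'.1) ⟨j, Finset.mem_insert_of_mem hj⟩
            = e i' j := by
        rintro γ ⟨i', hi', hq⟩
        obtain ⟨j0, hj0⟩ := hp i' hi'
        apply hj0
        have := hq j0.1 j0.2
        simp only [heq] at this
        rw [← this]
        simp only [q, dif_pos j0.2]
      have hval : ∀ γ, γ ∉ F → xf γ i = (if (q γ).down then a else b) := by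
        intro γ hγ
        show ((v γ (fun j' : ↥(insert γ F) => e i j'.1) : T) : X) = _
        rw [show v γ (fun j' : ↥(insert γ F) => e i j'.1)
            = if ((fun j' : ↥(insert γ F) => e i j'.1)
                ⟨γ, Finset.mem_insert_self γ F⟩).down then ⟨a, haT⟩ else ⟨b, hbT⟩ from
          dif_neg (hnotex γ)]
        simp only [heq]
        split <;> rfl
      have hqα : (q α).down = true := by
        simp [q, dif_neg hα]
      have hqβ : (q β).down = false := by
        simp [q, dif_neg hβ, Ne.symm hαβ]
      intro hcontra
      have h1 : xf α i = a := by rw [hval α hα, hqα]; simp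
      have h2 : xf β i = b := by rw [hval β hβ, hqβ]; simp
      rw [hcontra, h2] at h1
      exact hab h1.symm
    -- conclude
    have hcompl : #(↥((↑F : Set J)ᶜ)) = κ := by
      rw [mk_compl_of_infinite]
      · exact hJc
      · exact lt_of_lt_of_le F.finite_toSet.lt_aleph0 (hJc ▸ hκ)
    rw [← hcompl]
    refine mk_le_of_injective (f := fun α : ↥((↑F : Set J)ᶜ) =>
      (⟨xf α.1, hxfA α.1, hxfU α.1⟩ : ↥(A ∩ U))) ?_
    intro α β hαβeq
    by_contra hne'
    have hne2 : α.1 ≠ β.1 := fun h => hne' (Subtype.ext h)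
    exact hinj α.1 α.2 β.1 β.2 hne2 (congrArg Subtype.val hαβeq)
  -- assembling
  refine ⟨A, ?_, hKD, hfin⟩
  refine le_antisymm hAκ ?_
  have := hKD Set.univ isOpen_univ ⟨fun _ => a, trivial⟩
  rwa [Set.inter_univ] at this
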